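/- Let α be a set, f, φ : α → ℝ, and m, r, s, ε ∈ ℝ with ε > 0. Suppose: A = { a ∈ α : f(a) = m } is nonempty; f(a) ≥ m for all a ∈ α; for all a ∈ α, if f(a) ≠ m then f(a) ≥ m + ε; and r ≤ φ(a) ≤ s for all a ∈ α. Then sInf{ φ(a) : a ∈ A } = sInf{ ((s − r)/ε + 1)·(f(a) − m) + φ(a) : a ∈ α }. -/

import Mathlib

/-- Quantification over the argmin set `A = {a : f a = m}` can be rewritten as
an unrestricted infimum with a penalty term. -/
theorem stmt_16 (α : Type*) (f φ : α → ℝ) (m r s ε : ℝ) (hε : 0 < ε)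
    (A : Set α) (hA : A = {a : α | f a = m}) (hAne : A.Nonempty)
    (hmin : ∀ a : α, m ≤ f a)
    (hgap : ∀ a : α, f a ≠ m → m + ε ≤ f a)
    (hbd : ∀ a : α, r ≤ φ a ∧ φ a ≤ s) :
    sInf (φ '' A) =
      sInf (Set.range fun a : α => ((s - r) / ε + 1) * (f a - m) + φ a) := by
  set c := (s - r) / ε + 1 with hc
  have hc0 : 0 < c := by
    have : 0 ≤ (s - r) / ε := by
      apply div_nonneg _ hε.le
      obtain ⟨a₀, ha₀⟩ := hAne
      have h := hbd a₀
      linarith [h.1, h.2]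
    rw [hc]; linarith
  have hAeq : ∀ a ∈ A, c * (f a - m) + φ a = φ a := by
    intro a ha
    rw [hA] at ha
    simp [Set.mem_setOf_eq] at ha
    rw [ha]; ring
  have hsub : φ '' A ⊆ Set.range fun a : α => c * (f a - m) + φ a := by
    rintro x ⟨a, ha, rfl⟩
    exact ⟨a, hAeq a ha⟩
  have hbddg : BddBelow (Set.range fun a : α => c * (f a - m) + φ a) := by
    refine ⟨r, ?_⟩
    rintro x ⟨a, rfl⟩
    have h1 : 0 ≤ c * (f a - m) := mul_nonneg hc0.le (by linarith [hmin a])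
    have := (hbd a).1
    simp only
    linarith
  have hbddφ : BddBelow (φ '' A) := hbddg.mono hsub
  have hne : (φ '' A).Nonempty := hAne.image φ
  refine le_antisymm ?_ (csInf_le_csInf hbddg hne hsub)
  refine le_csInf (Set.range_nonempty_iff_nonempty.mpr ⟨hAne.choose⟩) ?_
  rintro x ⟨a, rfl⟩
  by_cases hfa : f a = m
  · have haA : a ∈ A := by rw [hA]; exact hfa
    have : c * (f a - m) + φ a = φ a := hAeq a haA
    simp only [this]
    exact csInf_le hbddφ ⟨a, haA, rfl⟩
  · obtain ⟨a₀, ha₀⟩ := hAne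
    have hle : sInf (φ '' A) ≤ φ a₀ := csInf_le hbddφ ⟨a₀, ha₀, rfl⟩
    have h1 : m + ε ≤ f a := hgap a hfa
    have h2 : c * ε ≤ c * (f a - m) := by
      apply mul_le_mul_of_nonneg_left _ hc0.le
      linarith
    have h3 : c * ε = s - r + ε := by
      rw [hc, add_mul, div_mul_cancel₀ _ hε.ne', one_mul]
    have := (hbd a).1
    have := (hbd a₀).2
    simp only
    linarith
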